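/- Let T_n be a sequence of positive real random variables converging to 1 in probability, and let t_n → ∞ be positive reals. Suppose sqrt(t_n)(T_n - 1) converges in distribution to N(0, τ²). Define log B_n = ⌊t_n⌋ (log T_n - (T_n - 1) + (T_n - 1)²/2). Then log B_n → 0 in probability as n → ∞. -/

import Mathlib

open MeasureTheory ProbabilityTheory Filter
open scoped ENNReal NNReal Topology

lemma taylor_log_bound {u : ℝ} (hu : |u| ≤ 1/2) :
    |Real.log (1 + u) - u + u ^ 2 / 2| ≤ 2 * |u| ^ 3 := by
  have h1 : |(-u)| < 1 := by rw [abs_neg]; linarith [abs_nonneg u]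
  have h := Real.abs_log_sub_add_sum_range_le h1 2
  rw [Finset.sum_range_succ, Finset.sum_range_one] at h
  have he : (-u) ^ (0 + 1) / ((0:ℕ) + 1 : ℝ) + (-u) ^ (1 + 1) / ((1:ℕ) + 1 : ℝ)
      + Real.log (1 - -u) = Real.log (1 + u) - u + u ^ 2 / 2 := by
    push_cast; ring_nf
  rw [abs_neg] at h
  have hub : |u| ^ (2 + 1) / (1 - |u|) ≤ 2 * |u| ^ 3 := by
    rw [div_le_iff₀ (by linarith)]
    have h3 : |u| ^ (2 + 1) = |u| ^ 3 := by norm_num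
    rw [h3]
    nlinarith [abs_nonneg u, pow_nonneg (abs_nonneg u) 3,
      mul_nonneg (pow_nonneg (abs_nonneg u) 3) (by linarith : (0:ℝ) ≤ 1 - 2 * |u|)]
  calc |Real.log (1 + u) - u + u ^ 2 / 2|
      = |(-u) ^ (0 + 1) / ((0:ℕ) + 1 : ℝ) + (-u) ^ (1 + 1) / ((1:ℕ) + 1 : ℝ)
        + Real.log (1 - -u)| := by rw [he]
    _ ≤ |u| ^ (2 + 1) / (1 - |u|) := h
    _ ≤ 2 * |u| ^ 3 := hub

lemma key_pointwise {ε mr tn Tω : ℝ} (hε : 0 < ε) (hm : 1 ≤ mr) (htn : 0 < tn)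
    (h1 : |Tω - 1| < 1/2) (h2 : |Real.sqrt tn * (Tω - 1)| < mr)
    (h3 : |Tω - 1| < ε / (2 * mr ^ 2)) :
    |(⌊tn⌋₊ : ℝ) * (Real.log Tω - (Tω - 1) + (Tω - 1) ^ 2 / 2)| < ε := by
  set u : ℝ := Tω - 1 with hud
  have hTω : Tω = 1 + u := by rw [hud]; ring
  have hlog : |Real.log Tω - u + u ^ 2 / 2| ≤ 2 * |u| ^ 3 := by
    rw [hTω]; exact taylor_log_bound h1.le
  have hfloor : (⌊tn⌋₊ : ℝ) ≤ tn := Nat.floor_le htn.le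
  have hfl0 : (0:ℝ) ≤ (⌊tn⌋₊ : ℝ) := Nat.cast_nonneg _
  have hB0 : (0:ℝ) ≤ Real.sqrt tn := Real.sqrt_nonneg _
  have hBA : |Real.sqrt tn * u| = Real.sqrt tn * |u| := by
    rw [abs_mul, abs_of_nonneg hB0]
  have hsq : Real.sqrt tn ^ 2 = tn := Real.sq_sqrt htn.le
  have hA0 : (0:ℝ) ≤ |u| := abs_nonneg _
  have hmr0 : (0:ℝ) < mr := lt_of_lt_of_le one_pos hm
  have hBA' : Real.sqrt tn * |u| < mr := by rwa [hBA] at h2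
  have step1 : |(⌊tn⌋₊ : ℝ) * (Real.log Tω - u + u ^ 2 / 2)|
      ≤ tn * (2 * |u| ^ 3) := by
    rw [abs_mul, abs_of_nonneg hfl0]
    have := mul_le_mul hfloor hlog (abs_nonneg _) htn.le
    linarith
  have step2 : tn * (2 * |u| ^ 3) = 2 * (Real.sqrt tn * |u|) ^ 2 * |u| := by
    rw [mul_pow, hsq]; ring
  have step3 : 2 * (Real.sqrt tn * |u|) ^ 2 * |u| ≤ 2 * mr ^ 2 * |u| := by
    have hsqle : (Real.sqrt tn * |u|) ^ 2 ≤ mr ^ 2 := by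
      nlinarith [mul_nonneg hB0 hA0]
    nlinarith
  have step4 : 2 * mr ^ 2 * |u| < ε := by
    have h2m : (0:ℝ) < 2 * mr ^ 2 := by positivity
    calc 2 * mr ^ 2 * |u| < 2 * mr ^ 2 * (ε / (2 * mr ^ 2)) :=
          mul_lt_mul_of_pos_left h3 h2m
      _ = ε := by field_simp
  calc |(⌊tn⌋₊ : ℝ) * (Real.log Tω - u + u ^ 2 / 2)|
      ≤ tn * (2 * |u| ^ 3) := step1
    _ = 2 * (Real.sqrt tn * |u|) ^ 2 * |u| := step2
    _ ≤ 2 * mr ^ 2 * |u| := step3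
    _ < ε := step4

/-- The measure of a measurable set under a pointwise supremum of a monotone sequence of
measures is the supremum of the measures. -/
lemma measure_iSup_apply {α : Type*} [MeasurableSpace α] (f : ℕ → Measure α)
    (hf : Monotone f) {A : Set α} (hA : MeasurableSet A) :
    (⨆ n, f n) A = ⨆ n, f n A := by
  have hadd : ∀ (g : ℕ → Set α), (∀ i, MeasurableSet (g i)) → Pairwise (Function.onFun Disjoint g) →
      (⨆ n, f n (⋃ i, g i)) = ∑' i, ⨆ n, f n (g i) := by
    intro g hg hd
    have h1 : ∀ n, f n (⋃ i, g i) = ∑' i, f n (g i) := fun n => measure_iUnion hd hg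
    simp_rw [h1]
    have h2 : ∀ n, (∑' i, f n (g i)) = ∫⁻ i, f n (g i) ∂(Measure.count) :=
      fun n => (lintegral_count _).symm
    have h3 : (∑' i, ⨆ n, f n (g i)) = ∫⁻ i, ⨆ n, f n (g i) ∂(Measure.count) :=
      (lintegral_count _).symm
    rw [h3]
    simp_rw [h2]
    exact (lintegral_iSup (fun n => measurable_of_countable _)
      (fun a b hab i => (hf hab : f a ≤ f b) (g i))).symm
  set ν : Measure α := Measure.ofMeasurable (fun s _ => ⨆ n, f n s) (by simp)
    (fun g hg hd => by
      simpa using hadd g hg hd) with hν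
  refine le_antisymm ?_ (iSup_le fun n => (le_iSup f n : f n ≤ ⨆ n, f n) A)
  have hub : (⨆ n, f n) ≤ ν := by
    refine iSup_le fun n => Measure.le_iff.2 fun s hs => ?_
    rw [hν, Measure.ofMeasurable_apply s hs]
    exact le_iSup (fun k => f k s) n
  calc (⨆ n, f n) A ≤ ν A := hub A
    _ = ⨆ n, f n A := by rw [hν, Measure.ofMeasurable_apply A hA]

/-- Let `T_n` be positive random variables converging to `1` in probability, `t_n → ∞`
positive reals, and suppose `sqrt(t_n)(T_n - 1)` converges in distribution to `N(0, τ²)`.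
With `log B_n = ⌊t_n⌋ (log T_n - (T_n - 1) + (T_n - 1)²/2)`, one has `log B_n → 0` in
probability. -/
theorem log_Bn_tendsto_zero_in_probability
    {Ω : Type*} [MeasurableSpace Ω] (μ : Measure Ω) [IsProbabilityMeasure μ]
    (T : ℕ → Ω → ℝ) (hTm : ∀ n, Measurable (T n)) (hTpos : ∀ n ω, 0 < T n ω)
    (t : ℕ → ℝ) (htpos : ∀ n, 0 < t n) (htlim : Tendsto t atTop atTop)
    (hprob : ∀ ε : ℝ, 0 < ε →
      Tendsto (fun n => μ {ω | ε ≤ |T n ω - 1|}) atTop (𝓝 0))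
    (τ2 : ℝ≥0)
    (hdist : Tendsto
      (fun n => (⟨Measure.map (fun ω => Real.sqrt (t n) * (T n ω - 1)) μ,
        Measure.isProbabilityMeasure_map ((measurable_const.mul ((hTm n).sub measurable_const)).aemeasurable)⟩ : ProbabilityMeasure ℝ))
      atTop (@nhds (ProbabilityMeasure ℝ) _ (⟨gaussianReal 0 τ2, inferInstance⟩ : ProbabilityMeasure ℝ))) :
    ∀ ε : ℝ, 0 < ε →
      Tendsto
        (fun n => μ {ω | ε ≤
          |(⌊t n⌋₊ : ℝ) * (Real.log (T n ω) - (T n ω - 1) + (T n ω - 1) ^ 2 / 2)|})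
        atTop (𝓝 0) := by
  intro ε hε
  rw [ENNReal.tendsto_nhds_zero]
  intro δ hδ
  set ν : Measure ℝ := gaussianReal 0 τ2 with hνdef
  have hδ3 : (0:ℝ≥0∞) < δ / 3 := ENNReal.div_pos hδ.ne' (by norm_num)
  set η : ℝ≥0∞ := min (δ / 3) 1 with hηdef
  have hη0 : (0:ℝ≥0∞) < η := lt_min hδ3 one_pos
  have hη1 : η ≤ 1 := min_le_right _ _
  have hηtop : η ≠ ∞ := (lt_of_le_of_lt hη1 (by norm_num)).ne
  have hηδ : η ≤ δ / 3 := min_le_left _ _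
  -- Gaussian tails tend to zero
  have htail : Tendsto (fun m : ℕ => ν {x : ℝ | (m : ℝ) ≤ |x|}) atTop (𝓝 0) := by
    have h0 : (⋂ m : ℕ, {x : ℝ | (m : ℝ) ≤ |x|}) = ∅ := by
      ext x
      simp only [Set.mem_iInter, Set.mem_setOf_eq, Set.mem_empty_iff_false, iff_false, not_forall,
        not_le]
      obtain ⟨m, hm⟩ := exists_nat_gt |x|
      exact ⟨m, hm⟩
    have hmeas : ∀ m : ℕ, NullMeasurableSet {x : ℝ | (m : ℝ) ≤ |x|} ν :=
      fun m => (measurable_abs measurableSet_Ici).nullMeasurableSet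
    have hanti : Antitone (fun m : ℕ => {x : ℝ | (m : ℝ) ≤ |x|}) := by
      intro a b hab x hx
      simp only [Set.mem_setOf_eq] at *
      exact le_trans (by exact_mod_cast hab) hx
    have hfin : ∃ m : ℕ, ν {x : ℝ | (m : ℝ) ≤ |x|} ≠ ∞ := ⟨0, measure_ne_top _ _⟩
    have := tendsto_measure_iInter_atTop (μ := ν) hmeas hanti hfin
    rw [h0] at this
    simpa [Function.comp_def] using this
  obtain ⟨m0, hm0⟩ := (htail.eventually_lt_const hη0).exists
  set m : ℕ := max m0 1 with hmdef
  have hm1 : (1:ℝ) ≤ (m : ℝ) := by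
    have : 1 ≤ m := le_max_right _ _
    exact_mod_cast this
  have hmν : ν {x : ℝ | (m : ℝ) ≤ |x|} < η := by
    refine lt_of_le_of_lt (measure_mono ?_) hm0
    intro x hx
    simp only [Set.mem_setOf_eq] at *
    refine le_trans ?_ hx
    exact_mod_cast le_max_left m0 1
  -- the Scott-open set
  set A : Set ℝ := {x : ℝ | |x| < (m : ℝ)} with hAdef
  have hAmeas : MeasurableSet A := measurableSet_lt measurable_abs measurable_const
  have hAcompl : Aᶜ = {x : ℝ | (m : ℝ) ≤ |x|} := by
    ext x; simp [hAdef, not_lt]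
  set c : ℝ≥0∞ := 1 - η with hcdef
  -- gaussian is in the open set
  have hgmem : c < ν A := by
    have hsum : ν A + ν Aᶜ = 1 := by
      rw [measure_add_measure_compl hAmeas, measure_univ]
    rw [hcdef, ENNReal.sub_lt_iff_lt_right hηtop hη1, ← hsum]
    rw [hAcompl]
    exact ENNReal.add_lt_add_left (measure_ne_top ν A) hmν
  have hAopen : IsOpen A := isOpen_lt continuous_abs continuous_const
  have hev : ∀ᶠ n in atTop,
      c < (Measure.map (fun ω => Real.sqrt (t n) * (T n ω - 1)) μ) A :=
    Filter.eventually_lt_of_lt_liminf (lt_of_lt_of_le hgmem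
      (ProbabilityMeasure.le_liminf_measure_open_of_tendsto hdist hAopen))
  -- translate to tail bound for the maps
  have hC : ∀ᶠ n in atTop,
      μ {ω | (m : ℝ) ≤ |Real.sqrt (t n) * (T n ω - 1)|} < η := by
    filter_upwards [hev] with n hn
    set ρn : Measure ℝ := Measure.map (fun ω => Real.sqrt (t n) * (T n ω - 1)) μ with hρdef
    haveI : IsProbabilityMeasure ρn :=
      Measure.isProbabilityMeasure_map ((measurable_const.mul ((hTm n).sub measurable_const)).aemeasurable)
    have hsum : ρn A + ρn Aᶜ = 1 := by
      rw [measure_add_measure_compl hAmeas, measure_univ]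
    have hAc : ρn Aᶜ < η := by
      by_contra hcon
      push_neg at hcon
      have h1 : ρn A + η ≤ 1 := by
        calc ρn A + η ≤ ρn A + ρn Aᶜ := add_le_add_right hcon _
          _ = 1 := hsum
      have h2 : ρn A ≤ 1 - η := ENNReal.le_sub_of_add_le_right hηtop h1
      exact absurd hn (not_lt.2 h2)
    have hmap : ρn Aᶜ = μ {ω | (m : ℝ) ≤ |Real.sqrt (t n) * (T n ω - 1)|} := by
      rw [hρdef, Measure.map_apply (show Measurable (fun ω => Real.sqrt (t n) * (T n ω - 1)) from
        measurable_const.mul ((hTm n).sub measurable_const))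
        (hAmeas.compl), hAcompl]
      rfl
    rwa [hmap] at hAc
  have hB : ∀ᶠ n in atTop, μ {ω | (1:ℝ)/2 ≤ |T n ω - 1|} < δ / 3 :=
    (hprob (1/2) (by norm_num)).eventually_lt_const hδ3
  have hεm : (0:ℝ) < ε / (2 * (m : ℝ) ^ 2) := by positivity
  have hD : ∀ᶠ n in atTop, μ {ω | ε / (2 * (m : ℝ) ^ 2) ≤ |T n ω - 1|} < δ / 3 :=
    (hprob _ hεm).eventually_lt_const hδ3
  filter_upwards [hB, hC, hD] with n h1 h2 h3
  have hsub : {ω | ε ≤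
      |(⌊t n⌋₊ : ℝ) * (Real.log (T n ω) - (T n ω - 1) + (T n ω - 1) ^ 2 / 2)|}
      ⊆ {ω | (1:ℝ)/2 ≤ |T n ω - 1|}
        ∪ {ω | (m : ℝ) ≤ |Real.sqrt (t n) * (T n ω - 1)|}
        ∪ {ω | ε / (2 * (m : ℝ) ^ 2) ≤ |T n ω - 1|} := by
    intro ω hω
    by_contra hcon
    simp only [Set.mem_union, Set.mem_setOf_eq, not_or, not_le] at hcon
    obtain ⟨⟨hc1, hc2⟩, hc3⟩ := hcon
    exact absurd hω (not_le.mpr (key_pointwise hε hm1 (htpos n) hc1 hc2 hc3))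
  calc μ {ω | ε ≤
      |(⌊t n⌋₊ : ℝ) * (Real.log (T n ω) - (T n ω - 1) + (T n ω - 1) ^ 2 / 2)|}
      ≤ μ ({ω | (1:ℝ)/2 ≤ |T n ω - 1|}
        ∪ {ω | (m : ℝ) ≤ |Real.sqrt (t n) * (T n ω - 1)|}
        ∪ {ω | ε / (2 * (m : ℝ) ^ 2) ≤ |T n ω - 1|}) := measure_mono hsub
    _ ≤ μ ({ω | (1:ℝ)/2 ≤ |T n ω - 1|}
        ∪ {ω | (m : ℝ) ≤ |Real.sqrt (t n) * (T n ω - 1)|})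
        + μ {ω | ε / (2 * (m : ℝ) ^ 2) ≤ |T n ω - 1|} := measure_union_le _ _
    _ ≤ μ {ω | (1:ℝ)/2 ≤ |T n ω - 1|}
        + μ {ω | (m : ℝ) ≤ |Real.sqrt (t n) * (T n ω - 1)|}
        + μ {ω | ε / (2 * (m : ℝ) ^ 2) ≤ |T n ω - 1|} :=
        add_le_add_left (measure_union_le _ _) _
    _ ≤ δ / 3 + δ / 3 + δ / 3 :=
        add_le_add (add_le_add h1.le (le_trans h2.le hηδ)) h3.le
    _ = δ := ENNReal.add_thirds δ
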